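/- A bounded linear operator T: ℓ¹ → W defined on the canonical basis by T(eᵢ) = wᵢ is compact if and only if the sequence {wᵢ} is relatively compact in the Banach space W. -/

import Mathlib

open scoped Pointwise ENNReal

/-- A bounded linear operator T : ℓ¹ → W with T(eᵢ) = wᵢ on the canonical
basis is compact if and only if the sequence {wᵢ} is relatively compact in W. -/
theorem stmt_7 (W : Type*) [NormedAddCommGroup W] [NormedSpace ℝ W] [CompleteSpace W]
    (w : ℕ → W) (T : lp (fun _ : ℕ => ℝ) 1 →L[ℝ] W)
    (hT : ∀ i : ℕ, T (lp.single 1 i (1 : ℝ)) = w i) :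
    IsCompactOperator T ↔ IsCompact (closure (Set.range w)) := by
  haveI : Fact ((1 : ℝ≥0∞) ≤ 1) := ⟨le_refl _⟩
  constructor
  · intro hc
    have hc' : IsCompactOperator (T : lp (fun _ : ℕ => ℝ) 1 →ₗ[ℝ] W) := hc
    have hb : IsCompact (closure ((T : lp (fun _ : ℕ => ℝ) 1 →ₗ[ℝ] W) ''
        Metric.closedBall 0 1)) := hc'.isCompact_closure_image_closedBall 1
    refine hb.of_isClosed_subset isClosed_closure (closure_mono ?_)
    rintro _ ⟨i, rfl⟩
    refine ⟨lp.single 1 i (1 : ℝ), ?_, hT i⟩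
    rw [Metric.mem_closedBall, dist_zero_right]
    have : ‖lp.single (E := fun _ : ℕ => ℝ) 1 i ((fun _ => (1:ℝ)) i)‖ = ‖(1:ℝ)‖ :=
      lp.norm_single (E := fun _ : ℕ => ℝ) (p := 1) zero_lt_one i (1:ℝ)
    simp only [norm_one] at this
    simp [this]
  · intro hK
    classical
    -- the compact convex "envelope"
    set S : Set W := closure (Set.range w) ∪ (-(closure (Set.range w))) ∪ {0} with hS
    have hScomp : IsCompact S := ((hK.union hK.neg).union isCompact_singleton)
    have htb : TotallyBounded (convexHull ℝ S) :=
      totallyBounded_convexHull.2 hScomp.totallyBounded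
    have hKc : IsCompact (closure (convexHull ℝ S)) :=
      TotallyBounded.isCompact_of_isClosed htb.closure isClosed_closure
    refine ⟨closure (convexHull ℝ S), hKc, Filter.mem_of_superset
      (Metric.closedBall_mem_nhds 0 one_pos) ?_⟩
    intro x hx
    rw [Metric.mem_closedBall, dist_zero_right] at hx
    have h0 : (0 : W) ∈ convexHull ℝ S := subset_convexHull ℝ S (by simp [hS])
    -- x = ∑ single i (x i), so T x = ∑ (x i) • w i
    have hsum : HasSum (fun i : ℕ => lp.single (E := fun _ : ℕ => ℝ) 1 i (x i)) x :=
      lp.hasSum_single (by norm_num) x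
    have hTsum : HasSum (fun i : ℕ => (x i) • w i) (T x) := by
      have h := hsum.mapL T
      convert h using 2 with i
      rw [show lp.single (E := fun _ : ℕ => ℝ) 1 i (x i)
            = (x i) • lp.single 1 i (1 : ℝ) by
          rw [← lp.single_smul]; norm_num, map_smul, hT i]
    refine Set.mem_preimage.2 ?_
    refine mem_closure_of_tendsto hTsum (Filter.Eventually.of_forall fun G => ?_)
    -- scaling a hull point by c ∈ [0,1] stays in the hull (0 ∈ hull)
    have key : ∀ c : ℝ, 0 ≤ c → c ≤ 1 → ∀ y ∈ convexHull ℝ S, c • y ∈ convexHull ℝ S := by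
      intro c hc0 hc1 y hy
      have := convex_convexHull ℝ S hy h0 hc0 (by linarith : (0:ℝ) ≤ 1 - c) (by ring)
      simpa using this
    -- partial sum bound: ∑_{i∈G} |x i| ≤ ‖x‖ ≤ 1
    have hnorm : (∑ i ∈ G, |x i|) ≤ 1 := by
      have h1 := lp.hasSum_norm (p := 1) (by norm_num) x
      simp only [ENNReal.toReal_one, Real.rpow_one] at h1
      have h2 : (∑ i ∈ G, ‖x i‖) ≤ ‖x‖ :=
        sum_le_hasSum G (fun i _ => norm_nonneg _) h1
      simpa [Real.norm_eq_abs] using h2.trans hx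
    -- the partial sum is a subconvex combination of points of S
    set σ : ℕ → W := fun i => if 0 ≤ x i then w i else -(w i) with hσ
    have hσS : ∀ i, σ i ∈ S := by
      intro i
      by_cases h : 0 ≤ x i <;> simp only [hσ, h, if_true, if_false, hS]
      · exact Or.inl (Or.inl (subset_closure ⟨i, rfl⟩))
      · exact Or.inl (Or.inr (by
          simp only [Set.mem_neg, neg_neg]; exact subset_closure ⟨i, rfl⟩))
    have hrw : ∀ i, (x i) • w i = |x i| • σ i := by
      intro i
      by_cases h : 0 ≤ x i
      · simp [hσ, h, abs_of_nonneg h]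
      · simp only [hσ, h, if_false, smul_neg]
        rw [abs_of_neg (not_le.1 h)]
        simp
    rw [Finset.sum_congr rfl fun i _ => hrw i]
    by_cases hc : (∑ i ∈ G, |x i|) = 0
    · have hz : ∀ i ∈ G, |x i| = 0 :=
        (Finset.sum_eq_zero_iff_of_nonneg (fun i _ => abs_nonneg _)).1 hc
      rw [Finset.sum_eq_zero (fun i hi => by rw [hz i hi, zero_smul])]
      exact h0
    · have hcpos : 0 < ∑ i ∈ G, |x i| :=
        lt_of_le_of_ne (Finset.sum_nonneg fun i _ => abs_nonneg _) (Ne.symm hc)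
      have hcm : G.centerMass (fun i => |x i|) σ ∈ convexHull ℝ S :=
        G.centerMass_mem_convexHull (fun i _ => abs_nonneg _) hcpos (fun i _ => hσS i)
      have heq : (∑ i ∈ G, |x i| • σ i)
          = (∑ i ∈ G, |x i|) • G.centerMass (fun i => |x i|) σ := by
        rw [Finset.centerMass, smul_smul, mul_inv_cancel₀ hc, one_smul]
      rw [heq]
      exact key _ (le_of_lt hcpos) hnorm _ hcm
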